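/- arXiv:2605.23073 — 4 statements merged into one kernel-verified Lean document; each statement's English description precedes it below -/
import Mathlib

section
/- For any finite connected simple graph G on n vertices, the bandwidth satisfies B(G) ≤ n − diam(G), where diam(G) is the diameter of G (the maximum over pairs of vertices of the shortest-path distance). -/
/-- The bandwidth of a finite graph. -/
noncomputable def bandwidth {V : Type*} [Fintype V] (G : SimpleGraph V) : ℕ :=
  sInf {k : ℕ | ∃ σ : V ≃ Fin (Fintype.card V),
    ∀ u v : V, G.Adj u v → (((σ u).val : ℤ) - ((σ v).val : ℤ)).natAbs ≤ k}

/-- The diameter of a graph: the maximum over pairs of vertices of the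
shortest-path distance. -/
noncomputable def graphDiam {V : Type*} [Fintype V] (G : SimpleGraph V) : ℕ :=
  sSup {d : ℕ | ∃ u v : V, G.dist u v = d}

/-- Any distance from a fixed vertex is bounded by the number of vertices. -/
private lemma dist_lt_card' {V : Type*} [Fintype V] (G : SimpleGraph V)
    (hconn : G.Connected) (u v : V) : G.dist u v < Fintype.card V := by
  classical
  obtain ⟨p, hp⟩ := hconn.exists_walk_length_eq_dist u v
  calc G.dist u v ≤ p.bypass.length := G.dist_le p.bypass
    _ < Fintype.card V := p.bypass_isPath.length_lt

/-- One step towards `v` from `x`. -/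
private lemma exists_adj_dist_succ {V : Type*} (G : SimpleGraph V)
    (hconn : G.Connected) (x v : V) (m : ℕ) (h : G.dist x v = m + 1) :
    ∃ y, G.Adj x y ∧ G.dist y v = m := by
  obtain ⟨p, hp⟩ := hconn.exists_walk_length_eq_dist x v
  rw [h] at hp
  cases p with
  | nil => simp at hp
  | cons hadj q =>
      rename_i w
      refine ⟨w, hadj, le_antisymm ?_ ?_⟩
      · have := G.dist_le q
        simp only [SimpleGraph.Walk.length_cons] at hp
        omega
      · have htr := hconn.dist_triangle (u := x) (v := w) (w := v)
        have h1 : G.dist x w ≤ 1 := by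
          simpa using G.dist_le (SimpleGraph.Walk.cons hadj SimpleGraph.Walk.nil)
        omega

/-- Every distance value up to `dist u v` is attained. -/
private lemma exists_dist_eq' {V : Type*} (G : SimpleGraph V)
    (hconn : G.Connected) (u v : V) (d : ℕ) (hd : G.dist u v = d) :
    ∀ i, i ≤ d → ∃ x, G.dist u x = i ∧ G.dist x v = d - i := by
  intro i
  induction i with
  | zero => intro _; exact ⟨u, by simp, by simpa using hd⟩
  | succ i ih =>
      intro hle
      obtain ⟨x, hux, hxv⟩ := ih (by omega)
      have : G.dist x v = (d - i - 1) + 1 := by omega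
      obtain ⟨y, hady, hyv⟩ := exists_adj_dist_succ G hconn x v _ this
      refine ⟨y, le_antisymm ?_ ?_, by omega⟩
      · have h1 : G.dist u y ≤ G.dist u x + G.dist x y := hconn.dist_triangle
        have h2 : G.dist x y ≤ 1 := by
          simpa using G.dist_le (SimpleGraph.Walk.cons hady SimpleGraph.Walk.nil)
        omega
      · have h1 : G.dist u v ≤ G.dist u y + G.dist y v := hconn.dist_triangle
        omega

/-- For any finite connected simple graph on `n ≥ 2` vertices,
`B(G) ≤ n − diam(G)`. -/
theorem bandwidth_le_card_sub_diam {V : Type*} [Fintype V]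
    (G : SimpleGraph V) (hconn : G.Connected) (hn : 2 ≤ Fintype.card V) :
    bandwidth G ≤ Fintype.card V - graphDiam G := by
  classical
  set n := Fintype.card V with hncard
  -- the diameter is attained
  have hbdd : BddAbove {d : ℕ | ∃ u v : V, G.dist u v = d} := by
    refine ⟨n, fun d hd => ?_⟩
    obtain ⟨a, b, hab⟩ := hd
    exact hab ▸ (dist_lt_card' G hconn a b).le
  have hne : {d : ℕ | ∃ u v : V, G.dist u v = d}.Nonempty := by
    have : Nontrivial V := Fintype.one_lt_card_iff_nontrivial.mp (by omega)
    obtain ⟨a⟩ := this.to_nonempty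
    exact ⟨G.dist a a, a, a, rfl⟩
  have hmem : graphDiam G ∈ {d : ℕ | ∃ u v : V, G.dist u v = d} :=
    Nat.sSup_mem hne hbdd
  obtain ⟨u, v, huv⟩ := hmem
  set d := graphDiam G with hdd
  -- key: distances to u are all ≤ d
  have hdistle : ∀ x : V, G.dist u x ≤ d := fun x =>
    le_csSup hbdd ⟨u, x, rfl⟩
  -- all levels 0..d are inhabited
  have hlevel : ∀ i, i ≤ d → ∃ x : V, G.dist u x = i := fun i hi => by
    obtain ⟨x, hx, _⟩ := exists_dist_eq' G hconn u v d huv i hi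
    exact ⟨x, hx⟩
  choose z0 hz0 using hlevel
  let z : ℕ → V := fun k => if h : k ≤ d then z0 k h else u
  have hz : ∀ k, k ≤ d → G.dist u (z k) = k := by
    intro k hk
    simp only [z, dif_pos hk]
    exact hz0 k hk
  -- an ordering of V that is monotone in distance from u
  letI : LinearOrder V :=
    LinearOrder.lift' (fun x => toLex (G.dist u x, Fintype.equivFin V x))
      (fun a b hab => by
        have := congrArg (fun p : Lex (ℕ × Fin n) => (ofLex p).2) hab
        exact (Fintype.equivFin V).injective this)
  have hmono : ∀ x y : V, G.dist u x < G.dist u y → x < y := by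
    intro x y hxy
    change toLex (G.dist u x, Fintype.equivFin V x) <
      toLex (G.dist u y, Fintype.equivFin V y)
    exact Prod.Lex.left _ _ hxy
  let σ : V ≃o Fin n := (monoEquivOfFin V rfl).symm
  -- count: below x there are at least (dist u x) vertices
  have hbelow : ∀ x : V, G.dist u x ≤ (σ x).val := by
    intro x
    set i := G.dist u x with hi
    have hid : i ≤ d := hdistle x
    have hinj : Set.InjOn (fun k => σ (z k)) (Finset.range i) := by
      intro a ha b hb hab
      simp only [Finset.coe_range, Set.mem_Iio] at ha hb
      have heq := σ.injective hab
      have ha' := hz a (by omega)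
      have hb' := hz b (by omega)
      rw [heq] at ha'
      omega
    have hsub : ∀ k ∈ Finset.range i, σ (z k) ∈ Finset.Iio (σ x) := by
      intro k hk
      simp only [Finset.mem_range] at hk
      simp only [Finset.mem_Iio]
      exact σ.strictMono (hmono _ _ (by rw [hz k (by omega)]; omega))
    have := Finset.card_le_card_of_injOn _ hsub hinj
    rw [Finset.card_range, Fin.card_Iio] at this
    exact this
  -- count: above y there are at least (d - dist u y) vertices
  have habove : ∀ y : V, d - G.dist u y ≤ n - 1 - (σ y).val := by
    intro y
    set j := G.dist u y with hj
    have hjd : j ≤ d := hdistle y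
    have hinj : Set.InjOn (fun k => σ (z (j + 1 + k))) (Finset.range (d - j)) := by
      intro a ha b hb hab
      simp only [Finset.coe_range, Set.mem_Iio] at ha hb
      have heq := σ.injective hab
      have ha' := hz (j + 1 + a) (by omega)
      have hb' := hz (j + 1 + b) (by omega)
      rw [heq] at ha'
      omega
    have hsub : ∀ k ∈ Finset.range (d - j), σ (z (j + 1 + k)) ∈ Finset.Ioi (σ y) := by
      intro k hk
      simp only [Finset.mem_range] at hk
      simp only [Finset.mem_Ioi]
      exact σ.strictMono (hmono _ _ (by rw [hz (j + 1 + k) (by omega)]; omega))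
    have := Finset.card_le_card_of_injOn _ hsub hinj
    rw [Finset.card_range, Fin.card_Ioi] at this
    exact this
  -- adjacent vertices have distances differing by at most 1
  have hadjdist : ∀ x y : V, G.Adj x y → G.dist u y ≤ G.dist u x + 1 := by
    intro x y hadj
    have h1 : G.dist u y ≤ G.dist u x + G.dist x y := hconn.dist_triangle
    have h2 : G.dist x y ≤ 1 := by
      simpa using G.dist_le (SimpleGraph.Walk.cons hadj SimpleGraph.Walk.nil)
    omega
  -- finish
  apply Nat.sInf_le
  refine ⟨σ.toEquiv, ?_⟩
  intro x y hadj
  have hxr : ((σ.toEquiv x : Fin n)).val = (σ x).val := rfl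
  have hyr : ((σ.toEquiv y : Fin n)).val = (σ y).val := rfl
  rw [hxr, hyr]
  -- key estimate for the ordered case
  have key : ∀ a b : V, G.Adj a b → (σ a).val ≤ (σ b).val →
      (σ b).val - (σ a).val ≤ n - d := by
    intro a b hab _
    have h1 := hbelow a
    have h2 := habove b
    have h3 := hadjdist a b hab
    have h4 : (σ b).val < n := (σ b).isLt
    have h5 : G.dist u b ≤ d := hdistle b
    omega
  rcases le_total ((σ x).val) ((σ y).val) with h | h
  · have := key x y hadj h
    omega
  · have := key y x hadj.symm h
    omega
end

section
/- Let G be a graph on n vertices that is the union of a Hamiltonian path with vertex sequence v_1, ..., v_n and one extra edge (an 'arc'). Then B(G) ≤ 2. -/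
/-- Core fold layout for the case `a < b`, `a + b ≤ n - 1`. -/
def pcFold (n a b j : ℕ) : ℕ :=
  if a + b < j then n - 1 - j
  else if 2 * j ≤ a + b then (n - 1 - (a + b)) + 2 * j
  else (n - 1 - (a + b)) + 2 * (a + b - j) + 1

lemma pcFold_lt (n a b j : ℕ) (h1 : a + 2 ≤ b) (h2 : b < n) (h3 : a + b + 1 ≤ n)
    (hj : j < n) :
    pcFold n a b j < n := by
  unfold pcFold; split_ifs <;> omega

lemma pcFold_inj (n a b i j : ℕ) (h1 : a + 2 ≤ b) (h2 : b < n) (h3 : a + b + 1 ≤ n)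
    (hi : i < n) (hj : j < n) (h : pcFold n a b i = pcFold n a b j) : i = j := by
  unfold pcFold at h; split_ifs at h <;> omega

lemma pcFold_step (n a b j : ℕ) (h1 : a + 2 ≤ b) (h2 : b < n) (h3 : a + b + 1 ≤ n)
    (hj : j + 1 < n) :
    ((pcFold n a b j : ℤ) - (pcFold n a b (j + 1) : ℤ)).natAbs ≤ 2 := by
  unfold pcFold; split_ifs <;> omega

lemma pcFold_chord (n a b : ℕ) (h1 : a + 2 ≤ b) (h2 : b < n) (h3 : a + b + 1 ≤ n) :
    ((pcFold n a b a : ℤ) - (pcFold n a b b : ℤ)).natAbs ≤ 2 := by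
  unfold pcFold; split_ifs <;> omega

/-- Full layout handling both orientations. -/
def pLay (n a b j : ℕ) : ℕ :=
  if min a b + max a b + 1 ≤ n then pcFold n (min a b) (max a b) j
  else pcFold n (n - 1 - max a b) (n - 1 - min a b) (n - 1 - j)

section master
lemma pLay_lt {n a b : ℕ} (hgap : min a b + 2 ≤ max a b) (hbn : max a b < n)
    {j : ℕ} (hj : j < n) : pLay n a b j < n := by
  unfold pLay; split_ifs with h
  · exact pcFold_lt _ _ _ _ hgap hbn h hj
  · exact pcFold_lt _ _ _ _ (by omega) (by omega) (by omega) (by omega)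

lemma pLay_inj {n a b : ℕ} (hgap : min a b + 2 ≤ max a b) (hbn : max a b < n)
    {i j : ℕ} (hi : i < n) (hj : j < n) (h : pLay n a b i = pLay n a b j) : i = j := by
  unfold pLay at h; split_ifs at h with hc
  · exact pcFold_inj _ _ _ _ _ hgap hbn hc hi hj h
  · have := pcFold_inj n (n - 1 - max a b) (n - 1 - min a b) (n - 1 - i) (n - 1 - j)
      (by omega) (by omega) (by omega) (by omega) (by omega) h
    omega

lemma pLay_step {n a b : ℕ} (hgap : min a b + 2 ≤ max a b) (hbn : max a b < n)
    {j : ℕ} (hj : j + 1 < n) :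
    ((pLay n a b j : ℤ) - (pLay n a b (j + 1) : ℤ)).natAbs ≤ 2 := by
  unfold pLay; split_ifs with hc
  · exact pcFold_step _ _ _ _ hgap hbn hc hj
  · have h' : n - 1 - j = (n - 1 - (j + 1)) + 1 := by omega
    have := pcFold_step n (n - 1 - max a b) (n - 1 - min a b) (n - 1 - (j + 1))
      (by omega) (by omega) (by omega) (by omega)
    rw [h']
    omega

lemma pLay_chord {n a b : ℕ} (hgap : min a b + 2 ≤ max a b) (hbn : max a b < n) :
    ((pLay n a b a : ℤ) - (pLay n a b b : ℤ)).natAbs ≤ 2 := by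
  rcases le_total a b with h | h
  · simp only [min_eq_left h, max_eq_right h] at hgap hbn
    unfold pLay
    simp only [min_eq_left h, max_eq_right h]
    split_ifs with hc
    · exact pcFold_chord _ _ _ hgap hbn hc
    · have key := pcFold_chord n (n - 1 - b) (n - 1 - a) (by omega) (by omega) (by omega)
      omega
  · simp only [min_eq_right h, max_eq_left h] at hgap hbn
    unfold pLay
    simp only [min_eq_right h, max_eq_left h]
    split_ifs with hc
    · have key := pcFold_chord n b a hgap hbn hc
      omega
    · have key := pcFold_chord n (n - 1 - a) (n - 1 - b) (by omega) (by omega) (by omega)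
      omega

end master

/-- A graph consisting of a Hamiltonian path `v_1, …, v_n` (here the vertices
`0, …, n-1` of `Fin n` in order) together with a single extra arc `{a, b}` with
`|a − b| > 1` has bandwidth at most `2`. -/
theorem bandwidth_le_two_of_one_arc {n : ℕ} (G : SimpleGraph (Fin n)) (a b : Fin n)
    (hab : 1 < (((a : Fin n).val : ℤ) - (b.val : ℤ)).natAbs)
    (hadj : ∀ u v : Fin n, G.Adj u v ↔
      ((u.val : ℤ) - (v.val : ℤ)).natAbs = 1 ∨ (u = a ∧ v = b) ∨ (u = b ∧ v = a)) :
    bandwidth G ≤ 2 := by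
  have ha : a.val < n := a.isLt
  have hb : b.val < n := b.isLt
  have hgap : min a.val b.val + 2 ≤ max a.val b.val := by omega
  have hbn : max a.val b.val < n := by omega
  have hf : Function.Injective (fun j : Fin n =>
      (⟨pLay n a.val b.val j.val, pLay_lt hgap hbn j.isLt⟩ : Fin n)) := by
    intro i j hij
    have : pLay n a.val b.val i.val = pLay n a.val b.val j.val := by
      simpa using congrArg Fin.val hij
    exact Fin.ext (pLay_inj hgap hbn i.isLt j.isLt this)
  have hbij := (Finite.injective_iff_bijective).mp hf
  let e : Fin n ≃ Fin n := Equiv.ofBijective _ hbij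
  have he : ∀ j : Fin n, (e j).val = pLay n a.val b.val j.val := fun j => rfl
  let σ : Fin n ≃ Fin (Fintype.card (Fin n)) := e.trans (finCongr (Fintype.card_fin n).symm)
  have hσ : ∀ j : Fin n, (σ j).val = pLay n a.val b.val j.val := fun j => rfl
  apply Nat.sInf_le
  refine ⟨σ, fun u v huv => ?_⟩
  rw [hadj] at huv
  rw [hσ u, hσ v]
  rcases huv with h | ⟨hu, hv⟩ | ⟨hu, hv⟩
  · -- path edge
    have : u.val = v.val + 1 ∨ v.val = u.val + 1 := by omega
    rcases this with h' | h'
    · have := pLay_step hgap hbn (show v.val + 1 < n by omega)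
      rw [h']; omega
    · have := pLay_step hgap hbn (show u.val + 1 < n by omega)
      rw [h']; omega
  · subst hu; subst hv; exact pLay_chord hgap hbn
  · subst hu; subst hv
    have := pLay_chord hgap hbn
    omega
end

section
/- Coding gain is at most 2 with one redundant chunk: For any graph G and any t ≥ 2, S^u_t(G, n+1) ≤ 2 · S^c_t(G, n+1), i.e., the best uncoded store with one redundant chunk has stretch metric at most twice that of the best (linearly) coded store with one redundant chunk. -/
namespace CGL
open Submodule Finset

lemma z2cases (a : ZMod 2) : a = 0 ∨ a = 1 := by
  revert a; decide

lemma z2ne (a : ZMod 2) (h : a ≠ 0) : a = 1 := by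
  rcases z2cases a with h0 | h1
  · exact absurd h0 h
  · exact h1

lemma z2add_self (a : ZMod 2) : a + a = 0 := by
  revert a; decide

variable {n : ℕ}

/-- The linear map sending a selection vector to the corresponding sum of chunks. -/
noncomputable def phi (c : Fin (n+1) → (Fin n → ZMod 2)) :
    (Fin (n+1) → ZMod 2) →ₗ[ZMod 2] (Fin n → ZMod 2) where
  toFun y := ∑ j : Fin (n+1), y j • c j
  map_add' y z := by
    simp [add_smul, Finset.sum_add_distrib]
  map_smul' a y := by
    simp [Finset.smul_sum, smul_smul]

lemma vadd_self (y : Fin (n+1) → ZMod 2) : y + y = 0 := by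
  funext j; exact z2add_self (y j)

/-- Support of a selection vector as a finset. -/
def supp (y : Fin (n+1) → ZMod 2) : Finset (Fin (n+1)) :=
  Finset.univ.filter (fun j => y j ≠ 0)

lemma mem_supp {y : Fin (n+1) → ZMod 2} {j : Fin (n+1)} : j ∈ supp y ↔ y j ≠ 0 := by
  simp [supp]

lemma supp_nonempty {y : Fin (n+1) → ZMod 2} (h : y ≠ 0) : (supp y).Nonempty := by
  rcases Function.ne_iff.mp h with ⟨j, hj⟩
  exact ⟨j, mem_supp.mpr hj⟩

/-- Min of support (junk value 0 if empty). -/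
noncomputable def sMin (y : Fin (n+1) → ZMod 2) : ℕ :=
  if h : (supp y).Nonempty then ((supp y).min' h : ℕ) else 0

noncomputable def sMax (y : Fin (n+1) → ZMod 2) : ℕ :=
  if h : (supp y).Nonempty then ((supp y).max' h : ℕ) else 0

lemma sMin_le {y : Fin (n+1) → ZMod 2} {j : Fin (n+1)} (hj : y j ≠ 0) :
    sMin y ≤ (j : ℕ) := by
  have hne : (supp y).Nonempty := ⟨j, mem_supp.mpr hj⟩
  rw [sMin, dif_pos hne]
  exact_mod_cast Fin.le_iff_val_le_val.mp (Finset.min'_le _ _ (mem_supp.mpr hj))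

lemma le_sMax {y : Fin (n+1) → ZMod 2} {j : Fin (n+1)} (hj : y j ≠ 0) :
    (j : ℕ) ≤ sMax y := by
  have hne : (supp y).Nonempty := ⟨j, mem_supp.mpr hj⟩
  rw [sMax, dif_pos hne]
  exact_mod_cast Fin.le_iff_val_le_val.mp (Finset.le_max' _ _ (mem_supp.mpr hj))

lemma sMin_mem {y : Fin (n+1) → ZMod 2} (h : y ≠ 0) :
    ∃ j : Fin (n+1), y j ≠ 0 ∧ (j : ℕ) = sMin y := by
  have hne := supp_nonempty h
  refine ⟨(supp y).min' hne, mem_supp.mp ((supp y).min'_mem hne), ?_⟩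
  rw [sMin, dif_pos hne]

lemma sMax_mem {y : Fin (n+1) → ZMod 2} (h : y ≠ 0) :
    ∃ j : Fin (n+1), y j ≠ 0 ∧ (j : ℕ) = sMax y := by
  have hne := supp_nonempty h
  refine ⟨(supp y).max' hne, mem_supp.mp ((supp y).max'_mem hne), ?_⟩
  rw [sMax, dif_pos hne]

lemma sMin_le_sMax {y : Fin (n+1) → ZMod 2} (h : y ≠ 0) : sMin y ≤ sMax y := by
  obtain ⟨j, hj, hje⟩ := sMax_mem h
  calc sMin y ≤ (j : ℕ) := sMin_le hj
  _ = sMax y := hje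

/-- Extraction: membership in the span of a set over ZMod 2 gives a subset sum. -/
lemma span_extract {x : Fin n → ZMod 2} {S : Set (Fin n → ZMod 2)}
    (h : x ∈ span (ZMod 2) S) :
    ∃ T : Finset (Fin n → ZMod 2), ↑T ⊆ S ∧ ∑ w ∈ T, w = x := by
  rw [mem_span_set] at h
  obtain ⟨l, hls, hsum⟩ := h
  refine ⟨l.support, hls, ?_⟩
  rw [← hsum, Finsupp.sum]
  refine Finset.sum_congr rfl (fun w hw => ?_)
  have : l w = 1 := z2ne _ (Finsupp.mem_support_iff.mp hw)
  rw [this, one_smul]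

/-- Positions extraction: a subset-sum of chunks from positions satisfying `P`. -/
lemma span_extract_pos {c : Fin (n+1) → (Fin n → ZMod 2)} {x : Fin n → ZMod 2}
    {P : Fin (n+1) → Prop}
    (h : x ∈ span (ZMod 2) {w | ∃ j : Fin (n+1), P j ∧ w = c j}) :
    ∃ K : Finset (Fin (n+1)), (∀ j ∈ K, P j) ∧ ∑ j ∈ K, c j = x := by
  obtain ⟨T, hTS, hTsum⟩ := span_extract h
  have hch : ∀ w ∈ T, ∃ j : Fin (n+1), P j ∧ w = c j := fun w hw => hTS hw
  choose f hf1 hf2 using hch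
  classical
  refine ⟨T.attach.image (fun w => f w.1 w.2), ?_, ?_⟩
  · intro j hj
    rcases Finset.mem_image.mp hj with ⟨w, _, rfl⟩
    exact hf1 _ _
  · rw [Finset.sum_image, ← hTsum]
    · rw [← Finset.sum_attach T (fun w => w)]
      exact Finset.sum_congr rfl (fun w _ => (hf2 w.1 w.2).symm)
    · intro w _ w' _ hee
      have : w.1 = w'.1 := by rw [hf2 w.1 w.2, hf2 w'.1 w'.2]; exact congrArg c hee
      exact Subtype.ext this

/-- The indicator vector of a finset. -/
def ind (K : Finset (Fin (n+1))) : Fin (n+1) → ZMod 2 :=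
  fun j => if j ∈ K then 1 else 0

lemma ind_apply_ne {K : Finset (Fin (n+1))} {j : Fin (n+1)} :
    ind K j ≠ 0 ↔ j ∈ K := by
  unfold ind
  by_cases h : j ∈ K <;> simp [h]

lemma phi_ind (c : Fin (n+1) → (Fin n → ZMod 2)) (K : Finset (Fin (n+1))) :
    phi c (ind K) = ∑ j ∈ K, c j := by
  unfold phi ind
  simp only [LinearMap.coe_mk, AddHom.coe_mk]
  rw [← Finset.sum_filter_add_sum_filter_not Finset.univ (fun j => j ∈ K)]
  have h1 : ∀ j ∈ Finset.univ.filter (fun j => j ∈ K),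
      (if j ∈ K then (1 : ZMod 2) else 0) • c j = c j := by
    intro j hj; simp [Finset.mem_filter.mp hj |>.2]
  have h2 : ∀ j ∈ Finset.univ.filter (fun j => ¬ j ∈ K),
      (if j ∈ K then (1 : ZMod 2) else 0) • c j = 0 := by
    intro j hj; simp [Finset.mem_filter.mp hj |>.2]
  rw [Finset.sum_congr rfl h1, Finset.sum_congr rfl h2, Finset.sum_const_zero, add_zero]
  congr 1
  ext j; simp



lemma single_ne_zero' (u : Fin n) : (Pi.single u 1 : Fin n → ZMod 2) ≠ 0 := by
  intro h
  have := congrFun h u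
  simp at this

/-- Existence of a nonzero kernel element, given that `phi c` is surjective. -/
lemma exists_delta (c : Fin (n+1) → (Fin n → ZMod 2))
    (hsurj : ∀ u : Fin n, ∃ y, phi c y = Pi.single u 1) :
    ∃ δ : Fin (n+1) → ZMod 2, δ ≠ 0 ∧ phi c δ = 0 ∧
      (∀ z, phi c z = 0 → z = 0 ∨ z = δ) := by
  classical
  have hrange : LinearMap.range (phi c) = ⊤ := by
    rw [← top_le_iff, ← (Pi.basisFun (ZMod 2) (Fin n)).span_eq, Submodule.span_le]
    rintro w ⟨u, rfl⟩
    rw [Pi.basisFun_apply]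
    obtain ⟨y, hy⟩ := hsurj u
    exact ⟨y, hy⟩
  have hrank : Module.finrank (ZMod 2) (LinearMap.range (phi c)) = n := by
    rw [hrange]
    rw [finrank_top]
    rw [Module.finrank_pi]
    simp
  have hdom : Module.finrank (ZMod 2) (Fin (n+1) → ZMod 2) = n + 1 := by
    rw [Module.finrank_pi]; simp
  have hker : Module.finrank (ZMod 2) (LinearMap.ker (phi c)) = 1 := by
    have := LinearMap.finrank_range_add_finrank_ker (phi c)
    rw [hrank, hdom] at this
    omega
  have hkerne : LinearMap.ker (phi c) ≠ ⊥ := by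
    intro hbot
    rw [hbot] at hker
    simp at hker
  obtain ⟨δ, hδker, hδne⟩ := (Submodule.ne_bot_iff _).mp hkerne
  refine ⟨δ, hδne, hδker, ?_⟩
  have hspan : span (ZMod 2) {δ} = LinearMap.ker (phi c) := by
    apply eq_of_le_of_finrank_le
    · rw [Submodule.span_le, Set.singleton_subset_iff]; exact hδker
    · rw [hker, finrank_span_singleton hδne]
  intro z hz
  have : z ∈ span (ZMod 2) {δ} := by rw [hspan]; exact hz
  obtain ⟨a, ha⟩ := Submodule.mem_span_singleton.mp this
  have : a = 0 ∨ a = 1 := by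
    clear ha
    revert a; decide
  rcases this with rfl | rfl
  · left; rw [← ha, zero_smul]
  · right; rw [← ha, one_smul]

/-- From a linearly independent family of `n+1` vectors in a space of dim `n+1`,
extract a permutation hitting nonzero coordinates. -/
lemma exists_perm_of_linearIndependent (w : Fin (n+1) → (Fin (n+1) → ZMod 2))
    (h : LinearIndependent (ZMod 2) w) :
    ∃ σ : Equiv.Perm (Fin (n+1)), ∀ j, w j (σ j) ≠ 0 := by
  classical
  set M : Matrix (Fin (n+1)) (Fin (n+1)) (ZMod 2) := Matrix.of (fun i j => w j i) with hM
  have hdet : M.det ≠ 0 := by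
    intro h0
    obtain ⟨v, hvne, hv0⟩ := Matrix.exists_mulVec_eq_zero_iff.mpr h0
    have : ∑ j, v j • w j = 0 := by
      funext i
      have := congrFun hv0 i
      rw [Matrix.mulVec, dotProduct] at this
      simpa [Finset.sum_apply, hM, mul_comm, smul_eq_mul] using this
    have hall := Fintype.linearIndependent_iff.mp h v this
    exact hvne (funext hall)
  rw [Matrix.det_apply] at hdet
  by_contra hcon
  push_neg at hcon
  apply hdet
  apply Finset.sum_eq_zero
  intro σ _
  obtain ⟨j, hj⟩ := hcon σ
  have : ∏ i, M (σ i) i = 0 := by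
    apply Finset.prod_eq_zero (Finset.mem_univ j)
    simpa [hM] using hj
  rw [this, smul_zero]


lemma z2_eq_of_iff (a b : ZMod 2) (h : a ≠ 0 ↔ b ≠ 0) : a = b := by
  rcases z2cases a with ha | ha <;> rcases z2cases b with hb | hb <;> subst ha <;> subst hb <;> simp_all

lemma z2_add_cancel (a b : ZMod 2) (h : a + b = 0) : a = b := by
  revert h; revert a b; decide

lemma z2_shift (a b d : ZMod 2) (h : a + b = d) : a = b + d := by
  revert h; revert a b d; decide

lemma single_inj {u v : Fin n} (h : (Pi.single u 1 : Fin n → ZMod 2) = Pi.single v 1) : u = v := by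
  by_contra hne
  have := congrFun h u
  rw [Pi.single_apply, Pi.single_apply] at this
  simp [hne] at this

/-- Structure of a solution pair with separated hulls. -/
lemma split_struct (δ X Z : Fin (n+1) → ZMod 2) (hXne : X ≠ 0) (hZne : Z ≠ 0)
    (hrel : ∀ j, δ j = X j + Z j) (hsep : sMax X < sMin Z) :
    (∀ j : Fin (n+1), X j ≠ 0 ↔ (δ j ≠ 0 ∧ (j : ℕ) ≤ sMax X)) ∧
    (∀ j : Fin (n+1), Z j ≠ 0 ↔ (δ j ≠ 0 ∧ sMin Z ≤ (j : ℕ))) ∧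
    sMin X = sMin δ ∧ sMax Z = sMax δ := by
  have hXz : ∀ j : Fin (n+1), (j : ℕ) ≤ sMax X → Z j = 0 := by
    intro j hj
    by_contra hZj
    have := sMin_le hZj
    omega
  have hZx : ∀ j : Fin (n+1), sMin Z ≤ (j : ℕ) → X j = 0 := by
    intro j hj
    by_contra hXj
    have := le_sMax hXj
    omega
  have h1 : ∀ j : Fin (n+1), X j ≠ 0 ↔ (δ j ≠ 0 ∧ (j : ℕ) ≤ sMax X) := by
    intro j
    constructor
    · intro hXj
      have hjle := le_sMax hXj
      refine ⟨?_, hjle⟩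
      rw [hrel j, hXz j hjle, add_zero]
      exact hXj
    · rintro ⟨hδj, hjle⟩
      have hz := hXz j hjle
      rw [hrel j, hz, add_zero] at hδj
      exact hδj
  have h2 : ∀ j : Fin (n+1), Z j ≠ 0 ↔ (δ j ≠ 0 ∧ sMin Z ≤ (j : ℕ)) := by
    intro j
    constructor
    · intro hZj
      have hjge := sMin_le hZj
      refine ⟨?_, hjge⟩
      rw [hrel j, hZx j hjge, zero_add]
      exact hZj
    · rintro ⟨hδj, hjge⟩
      have hx := hZx j hjge
      rw [hrel j, hx, zero_add] at hδj
      exact hδj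
  refine ⟨h1, h2, ?_, ?_⟩
  · -- sMin X = sMin δ
    obtain ⟨jx, hjx, hjxv⟩ := sMin_mem hXne
    have hδjx : δ jx ≠ 0 := ((h1 jx).mp hjx).1
    have hlow : sMin δ ≤ sMin X := by rw [← hjxv]; exact sMin_le hδjx
    have hδne : δ ≠ 0 := fun h0 => hδjx (by rw [h0]; rfl)
    obtain ⟨jd, hjd, hjdv⟩ := sMin_mem hδne
    rcases z2cases (X jd) with hX0 | hX1
    · -- X jd = 0 → Z jd ≠ 0 → jd ≥ sMin Z > sMax X ≥ jx = sMin X ≥ sMin δ = jd, contra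
      have hZjd : Z jd ≠ 0 := by
        rw [hrel jd, hX0, zero_add] at hjd
        exact hjd
      have := sMin_le hZjd
      have := le_sMax hjx
      omega
    · have hXjd : X jd ≠ 0 := by rw [hX1]; exact one_ne_zero
      have := sMin_le hXjd
      omega
  · -- sMax Z = sMax δ
    obtain ⟨jz, hjz, hjzv⟩ := sMax_mem hZne
    have hδjz : δ jz ≠ 0 := ((h2 jz).mp hjz).1
    have hhigh : sMax Z ≤ sMax δ := by rw [← hjzv]; exact le_sMax hδjz
    have hδne : δ ≠ 0 := fun h0 => hδjz (by rw [h0]; rfl)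
    obtain ⟨jd, hjd, hjdv⟩ := sMax_mem hδne
    rcases z2cases (Z jd) with hZ0 | hZ1
    · have hXjd : X jd ≠ 0 := by
        rw [hrel jd, hZ0, add_zero] at hjd
        exact hjd
      have := le_sMax hXjd
      have := sMin_le hjz
      omega
    · have hZjd : Z jd ≠ 0 := by rw [hZ1]; exact one_ne_zero
      have := le_sMax hZjd
      omega

/-- One-sidedness: there cannot be a left-exceptional and a right-exceptional
vertex for the same interval. -/
lemma one_sided {a b : ℕ} (δ Xu Zu Xv Zv : Fin (n+1) → ZMod 2)
    (hrelu : ∀ j, δ j = Xu j + Zu j) (hrelv : ∀ j, δ j = Xv j + Zv j)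
    (hZvne : Zv ≠ 0)
    (hsizev : sMax Xv + sMin Zv ≤ sMax Zv + sMin Xv)
    (hZu : ∀ j : Fin (n+1), Zu j ≠ 0 → a ≤ (j : ℕ) ∧ (j : ℕ) ≤ b)
    (hZv : ∀ j : Fin (n+1), Zv j ≠ 0 → a ≤ (j : ℕ) ∧ (j : ℕ) ≤ b)
    (σu σv : Fin (n+1))
    (hXσu : Xu σu ≠ 0) (hσua : (σu : ℕ) < a)
    (hXσv : Xv σv ≠ 0) (hσvb : b < (σv : ℕ)) : False := by
  have hZuσu : Zu σu = 0 := by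
    rcases z2cases (Zu σu) with h | h
    · exact h
    · have : Zu σu ≠ 0 := by rw [h]; exact one_ne_zero
      have := hZu σu this
      omega
  have hδσu : δ σu ≠ 0 := by
    rw [hrelu σu, hZuσu, add_zero]
    exact hXσu
  have hZvσu : Zv σu = 0 := by
    rcases z2cases (Zv σu) with h | h
    · exact h
    · have : Zv σu ≠ 0 := by rw [h]; exact one_ne_zero
      have := hZv σu this
      omega
  have hXvσu : Xv σu ≠ 0 := by
    have := hrelv σu
    rw [hZvσu, add_zero] at this
    rw [← this]
    exact hδσu
  have h1 := sMin_le hXvσu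
  have h2 := le_sMax hXσv
  obtain ⟨jz, hjz, hjzv⟩ := sMin_mem hZvne
  obtain ⟨jz2, hjz2, hjz2v⟩ := sMax_mem hZvne
  have h3 := hZv jz hjz
  have h4 := hZv jz2 hjz2
  omega


/-- Affordability of a position `j` relative to the hull of `z`. -/
def afford (j : ℕ) (z : Fin (n+1) → ZMod 2) : Prop :=
  2 * sMin z ≤ j + sMax z + 1 ∧ j + sMin z ≤ 2 * sMax z + 1

/-- Structure extracted from a "bad" vertex. -/
lemma bad_struct (δ X Z : Fin (n+1) → ZMod 2) (hXne : X ≠ 0) (hZne : Z ≠ 0)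
    (hrel : ∀ j, δ j = X j + Z j)
    (hsize : sMax X + sMin Z ≤ sMax Z + sMin X)
    (hbad : ∃ j : Fin (n+1), X j ≠ 0 ∧ ¬ afford (j : ℕ) Z) :
    ∃ p q : ℕ, p < q ∧
      (∀ j : Fin (n+1), δ j ≠ 0 → (j : ℕ) ≤ p ∨ q ≤ (j : ℕ)) ∧
      (∃ jp : Fin (n+1), δ jp ≠ 0 ∧ (jp : ℕ) = p) ∧
      ((∀ j : Fin (n+1), (δ j ≠ 0 ∧ (j : ℕ) ≤ p) ↔ X j ≠ 0) ∨
        (∀ j : Fin (n+1), (δ j ≠ 0 ∧ (j : ℕ) ≤ p) ↔ Z j ≠ 0)) ∧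
      ((sMin δ + sMax δ + 2 ≤ 2 * q ∧ p + q ≤ sMin δ + sMax δ) ∨
        (2 * p + 2 ≤ sMin δ + sMax δ ∧ sMin δ + sMax δ ≤ p + q)) := by
  obtain ⟨j₀, hj₀X, hnaff⟩ := hbad
  have hj₀lo := sMin_le hj₀X
  have hj₀hi := le_sMax hj₀X
  have hmmZ := sMin_le_sMax hZne
  have hmmX := sMin_le_sMax hXne
  have hsep : sMax X < sMin Z ∨ sMax Z < sMin X := by
    by_contra hcon
    push_neg at hcon
    exact hnaff ⟨by omega, by omega⟩
  rcases hsep with hsep | hsep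
  · -- X is the left part
    obtain ⟨hiffX, hiffZ, hminX, hmaxZ⟩ := split_struct δ X Z hXne hZne hrel hsep
    refine ⟨sMax X, sMin Z, hsep, ?_, ?_, Or.inl ?_, Or.inl ?_⟩
    · intro j hδj
      rcases z2cases (X j) with h | h
      · right
        have hZj : Z j ≠ 0 := by
          rw [hrel j, h, zero_add] at hδj
          exact hδj
        exact sMin_le hZj
      · left
        exact le_sMax (by rw [h]; exact one_ne_zero)
    · obtain ⟨jp, hjp, hjpv⟩ := sMax_mem hXne
      exact ⟨jp, ((hiffX jp).mp hjp).1, hjpv⟩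
    · intro j
      exact (hiffX j).symm
    · have hB : (j₀ : ℕ) + sMin Z ≤ 2 * sMax Z + 1 := by omega
      have hnA : ¬ (2 * sMin Z ≤ (j₀ : ℕ) + sMax Z + 1) := by
        intro hA
        exact hnaff ⟨hA, hB⟩
      omega
  · -- Z is the left part
    obtain ⟨hiffZ, hiffX, hminZ, hmaxX⟩ := split_struct δ Z X hZne hXne
      (fun j => by rw [hrel j, add_comm]) hsep
    refine ⟨sMax Z, sMin X, hsep, ?_, ?_, Or.inr ?_, Or.inr ?_⟩
    · intro j hδj
      rcases z2cases (Z j) with h | h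
      · right
        have hXj : X j ≠ 0 := by
          rw [hrel j, h, add_zero] at hδj
          exact hδj
        exact sMin_le hXj
      · left
        exact le_sMax (by rw [h]; exact one_ne_zero)
    · obtain ⟨jp, hjp, hjpv⟩ := sMax_mem hZne
      exact ⟨jp, ((hiffZ jp).mp hjp).1, hjpv⟩
    · intro j
      exact (hiffZ j).symm
    · have hA : 2 * sMin Z ≤ (j₀ : ℕ) + sMax Z + 1 := by omega
      have hnB : ¬ ((j₀ : ℕ) + sMin Z ≤ 2 * sMax Z + 1) := by
        intro hB
        exact hnaff ⟨hA, hB⟩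
      omega

/-- Numeric part of uniqueness of the bad vertex. -/
lemma bad_unique_num {d0 dI pu qu pv qv : ℕ}
    (hupq : pu < qu) (hvpq : pv < qv) (hpupv : pu < pv)
    (hsplitu : qu ≤ pv)
    (harithu : (d0 + dI + 2 ≤ 2 * qu ∧ pu + qu ≤ d0 + dI) ∨
      (2 * pu + 2 ≤ d0 + dI ∧ d0 + dI ≤ pu + qu))
    (harithv : (d0 + dI + 2 ≤ 2 * qv ∧ pv + qv ≤ d0 + dI) ∨
      (2 * pv + 2 ≤ d0 + dI ∧ d0 + dI ≤ pv + qv)) : False := by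
  rcases harithu with ⟨hu1, hu2⟩ | ⟨hu1, hu2⟩ <;>
    rcases harithv with ⟨hv1, hv2⟩ | ⟨hv1, hv2⟩ <;> omega


/-- Core simulation lemma: from a spanning coded store of length `n+1`, build an
uncoded store covering every coded recovery interval at stretch factor `2`. -/
lemma core (hn : 0 < n) (c : ℕ → (Fin n → ZMod 2))
    (hrec : ∀ u : Fin n, (Pi.single u 1 : Fin n → ZMod 2) ∈
      Submodule.span (ZMod 2) {w | ∃ j : ℕ, j ≤ n ∧ w = c j}) :
    ∃ s : ℕ → Fin n, (∀ v : Fin n, ∃ j : ℕ, j ≤ n ∧ s j = v) ∧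
      (∀ a b : ℕ, a ≤ b → b ≤ n →
        ∃ a' b' : ℕ, a' ≤ b' ∧ b' ≤ n ∧ b' + 1 + 2*a ≤ 2*(b+1) + a' ∧
          (∀ u : Fin n, (Pi.single u 1 : Fin n → ZMod 2) ∈
              Submodule.span (ZMod 2) {w | ∃ j : ℕ, a ≤ j ∧ j ≤ b ∧ w = c j} →
            ∃ j : ℕ, a' ≤ j ∧ j ≤ b' ∧ s j = u)) := by
  classical
  set cc : Fin (n+1) → (Fin n → ZMod 2) := fun j => c (j : ℕ) with hcc
  have hsetconv : ∀ a b : ℕ, b ≤ n →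
      {w : Fin n → ZMod 2 | ∃ j : ℕ, a ≤ j ∧ j ≤ b ∧ w = c j} =
      {w | ∃ j : Fin (n+1), (a ≤ (j : ℕ) ∧ (j : ℕ) ≤ b) ∧ w = cc j} := by
    intro a b hb
    ext w
    constructor
    · rintro ⟨j, hja, hjb, rfl⟩
      exact ⟨⟨j, by omega⟩, ⟨hja, hjb⟩, rfl⟩
    · rintro ⟨j, ⟨hja, hjb⟩, rfl⟩
      exact ⟨(j : ℕ), hja, hjb, rfl⟩
  have hwit : ∀ (a b : ℕ), b ≤ n → ∀ u : Fin n,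
      (Pi.single u 1 : Fin n → ZMod 2) ∈ Submodule.span (ZMod 2)
        {w | ∃ j : ℕ, a ≤ j ∧ j ≤ b ∧ w = c j} →
      ∃ y : Fin (n+1) → ZMod 2, phi cc y = Pi.single u 1 ∧
        ∀ j : Fin (n+1), y j ≠ 0 → a ≤ (j : ℕ) ∧ (j : ℕ) ≤ b := by
    intro a b hb u hu
    rw [hsetconv a b hb] at hu
    obtain ⟨K, hK, hKsum⟩ := span_extract_pos hu
    refine ⟨ind K, ?_, ?_⟩
    · rw [phi_ind, hKsum]
    · intro j hj
      exact hK j (ind_apply_ne.mp hj)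
  have hsol : ∀ u : Fin n, ∃ y, phi cc y = Pi.single u 1 := by
    intro u
    have hu' : (Pi.single u 1 : Fin n → ZMod 2) ∈ Submodule.span (ZMod 2)
        {w | ∃ j : ℕ, 0 ≤ j ∧ j ≤ n ∧ w = c j} := by
      have hseteq : {w : Fin n → ZMod 2 | ∃ j : ℕ, 0 ≤ j ∧ j ≤ n ∧ w = c j} =
          {w | ∃ j : ℕ, j ≤ n ∧ w = c j} := by
        ext w
        constructor
        · rintro ⟨j, _, hjn, rfl⟩; exact ⟨j, hjn, rfl⟩
        · rintro ⟨j, hjn, rfl⟩; exact ⟨j, Nat.zero_le _, hjn, rfl⟩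
      rw [hseteq]
      exact hrec u
    obtain ⟨y, hy, _⟩ := hwit 0 n le_rfl u hu'
    exact ⟨y, hy⟩
  obtain ⟨δ, hδne, hδker, hker2⟩ := exists_delta cc hsol
  have hxex : ∀ u : Fin n, ∃ X, phi cc X = Pi.single u 1 ∧
      sMax X + sMin (X + δ) ≤ sMax (X + δ) + sMin X := by
    intro u
    obtain ⟨y, hy⟩ := hsol u
    by_cases hcmp : sMax y + sMin (y + δ) ≤ sMax (y + δ) + sMin y
    · exact ⟨y, hy, hcmp⟩
    · refine ⟨y + δ, by rw [map_add, hδker, hy, add_zero], ?_⟩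
      have hyd : (y + δ) + δ = y := by
        funext j
        simp only [Pi.add_apply]
        rw [add_assoc, z2add_self, add_zero]
      rw [hyd]
      omega
  choose x hxphi hxsize using hxex
  have hXne : ∀ u, x u ≠ 0 := by
    intro u h0
    apply single_ne_zero' u
    rw [← hxphi u, h0, map_zero]
  have hZphi : ∀ u, phi cc (x u + δ) = Pi.single u 1 := by
    intro u; rw [map_add, hδker, add_zero, hxphi]
  have hZne : ∀ u, x u + δ ≠ 0 := by
    intro u h0
    apply single_ne_zero' u
    rw [← hZphi u, h0, map_zero]
  have hrelx : ∀ (u : Fin n) (j : Fin (n+1)), δ j = (x u) j + (x u + δ) j := by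
    intro u j
    simp only [Pi.add_apply]
    rw [← add_assoc, z2add_self, zero_add]
  have hsols : ∀ (u : Fin n) (y : Fin (n+1) → ZMod 2), phi cc y = Pi.single u 1 →
      y = x u ∨ y = x u + δ := by
    intro u y hy
    have h0 : phi cc (y + x u) = 0 := by
      rw [map_add, hy, hxphi]
      funext v
      simp only [Pi.add_apply, Pi.zero_apply]
      exact z2add_self _
    rcases hker2 _ h0 with h | h
    · left
      funext j
      have hj := congrFun h j
      simp only [Pi.add_apply, Pi.zero_apply] at hj
      exact z2_add_cancel _ _ hj
    · right
      funext j
      have hj := congrFun h j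
      simp only [Pi.add_apply] at hj
      exact z2_shift _ _ _ hj
  set badP : Fin n → Prop := fun u =>
    ∃ j : Fin (n+1), x u j ≠ 0 ∧ ¬ afford (j : ℕ) (x u + δ) with hbadPdef
  have hbadmono : ∀ u v, badP u → badP v → u = v := by
    intro u v hu hv
    obtain ⟨pu, qu, hupq, hsplitu, hpu, hiffu, harithu⟩ :=
      bad_struct δ (x u) (x u + δ) (hXne u) (hZne u) (hrelx u) (hxsize u) hu
    obtain ⟨pv, qv, hvpq, hsplitv, hpv, hiffv, harithv⟩ :=
      bad_struct δ (x v) (x v + δ) (hXne v) (hZne v) (hrelx v) (hxsize v) hv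
    have hvecs : ∀ (W1 W2 : Fin (n+1) → ZMod 2),
        (∀ j : Fin (n+1), (δ j ≠ 0 ∧ (j : ℕ) ≤ pu) ↔ W1 j ≠ 0) →
        (∀ j : Fin (n+1), (δ j ≠ 0 ∧ (j : ℕ) ≤ pu) ↔ W2 j ≠ 0) → W1 = W2 := by
      intro W1 W2 h1 h2
      funext j
      exact z2_eq_of_iff _ _ (((h1 j).symm).trans (h2 j))
    rcases Nat.lt_trichotomy pu pv with hlt | heq | hlt
    · obtain ⟨jpv, hjpv, hjpvv⟩ := hpv
      have hquv : qu ≤ pv := by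
        rcases hsplitu jpv hjpv with h | h <;> omega
      exact absurd (bad_unique_num hupq hvpq hlt hquv harithu harithv) (fun h => h)
    · subst heq
      apply single_inj (u := u) (v := v)
      rcases hiffu with h1 | h1 <;> rcases hiffv with h2 | h2
      · rw [← hxphi u, hvecs _ _ h1 h2, hxphi v]
      · rw [← hxphi u, hvecs _ _ h1 h2, hZphi v]
      · rw [← hZphi u, hvecs _ _ h1 h2, hxphi v]
      · rw [← hZphi u, hvecs _ _ h1 h2, hZphi v]
    · obtain ⟨jpu, hjpu, hjpuv⟩ := hpu
      have hqvu : qv ≤ pu := by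
        rcases hsplitv jpu hjpu with h | h <;> omega
      exact absurd (bad_unique_num hvpq hupq hlt hqvu harithv harithu) (fun h => h)
  set sstar : Fin n := if h : ∃ u, badP u then h.choose else ⟨0, hn⟩ with hsstardef
  have hbadstar : ∀ u, badP u → u = sstar := by
    intro u hu
    have hex : ∃ u, badP u := ⟨u, hu⟩
    rw [hsstardef, dif_pos hex]
    exact hbadmono u _ hu hex.choose_spec
  set U : Fin n → Fin (n+1) → Fin n := fun st j =>
    if h : (j : ℕ) < n then ⟨(j : ℕ), h⟩ else st with hUdef
  have hUcs : ∀ v : Fin n, U sstar (Fin.castSucc v) = v := by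
    intro v
    rw [hUdef]
    simp only
    rw [dif_pos (show ((Fin.castSucc v : Fin (n+1)) : ℕ) < n by simpa using v.isLt)]
    exact Fin.ext (by simp)
  have hUlast : U sstar (Fin.last n) = sstar := by
    rw [hUdef]
    simp
  set fam : Fin (n+1) → (Fin (n+1) → ZMod 2) :=
    fun j => if h : (j : ℕ) < n then x ⟨(j : ℕ), h⟩ else x sstar + δ with hfamdef
  have hfamcs : ∀ u : Fin n, fam (Fin.castSucc u) = x u := by
    intro u
    rw [hfamdef]
    simp only
    rw [dif_pos (show ((Fin.castSucc u : Fin (n+1)) : ℕ) < n by simpa using u.isLt)]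
    exact congrArg x (Fin.ext (by simp))
  have hfamlast : fam (Fin.last n) = x sstar + δ := by
    rw [hfamdef]
    simp
  have hphifam : ∀ j, phi cc (fam j) = Pi.single (U sstar j) 1 := by
    intro j
    rw [hfamdef, hUdef]
    by_cases h : (j : ℕ) < n
    · simp only [dif_pos h]
      exact hxphi _
    · simp only [dif_neg h]
      exact hZphi _
  have hlin : LinearIndependent (ZMod 2) fam := by
    rw [Fintype.linearIndependent_iff]
    intro g hg
    have hphisum : ∑ j : Fin (n+1), g j • (Pi.single (U sstar j) 1 : Fin n → ZMod 2) = 0 := by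
      have h0 : phi cc (∑ j, g j • fam j) = 0 := by rw [hg, map_zero]
      rw [map_sum] at h0
      simp only [map_smul] at h0
      simpa only [hphifam] using h0
    have hcoeff : ∀ v : Fin n,
        g (Fin.castSucc v) + (if v = sstar then g (Fin.last n) else 0) = 0 := by
      intro v
      have hv := congrFun hphisum v
      rw [Finset.sum_apply] at hv
      simp only [Pi.smul_apply, Pi.single_apply, smul_eq_mul, mul_ite, mul_one,
        mul_zero] at hv
      rw [Fin.sum_univ_castSucc] at hv
      simp only [hUcs, hUlast] at hv
      rw [Finset.sum_ite_eq] at hv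
      simpa using hv
    have hglast : g (Fin.last n) = 0 := by
      have hsum2 := hg
      rw [Fin.sum_univ_castSucc] at hsum2
      have hsum3 : ∑ j : Fin n, g (Fin.castSucc j) • fam (Fin.castSucc j)
          = g (Fin.castSucc sstar) • fam (Fin.castSucc sstar) := by
        apply Finset.sum_eq_single
        · intro j _ hj
          have hcv := hcoeff j
          rw [if_neg hj, add_zero] at hcv
          rw [hcv, zero_smul]
        · intro h
          exact absurd (Finset.mem_univ _) h
      have hcseq : g (Fin.castSucc sstar) = g (Fin.last n) := by
        have hcv := hcoeff sstar
        rw [if_pos rfl] at hcv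
        exact z2_add_cancel _ _ hcv
      have hxx : x sstar + (x sstar + δ) = δ := by
        funext j
        simp only [Pi.add_apply]
        rw [← add_assoc, z2add_self, zero_add]
      have hfin : g (Fin.last n) • δ = 0 := by
        have h4 := hsum2
        rw [hsum3, hfamcs, hfamlast, hcseq, ← smul_add, hxx] at h4
        exact h4
      rcases smul_eq_zero.mp hfin with h | h
      · exact h
      · exact absurd h hδne
    intro j
    refine Fin.lastCases ?_ ?_ j
    · exact hglast
    · intro v
      have hcv := hcoeff v
      by_cases hv : v = sstar
      · rw [if_pos hv, hglast, add_zero] at hcv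
        exact hcv
      · rw [if_neg hv, add_zero] at hcv
        exact hcv
  obtain ⟨σ, hσ⟩ := exists_perm_of_linearIndependent fam hlin
  have hσx : ∀ u : Fin n, x u (σ (Fin.castSucc u)) ≠ 0 := by
    intro u
    have h := hσ (Fin.castSucc u)
    rwa [hfamcs] at h
  have hσlast : (x sstar + δ) (σ (Fin.last n)) ≠ 0 := by
    have h := hσ (Fin.last n)
    rwa [hfamlast] at h
  set s : ℕ → Fin n := fun j => if h : j < n + 1 then U sstar (σ.symm ⟨j, h⟩) else sstar
    with hsdef
  have hsval : ∀ i : Fin (n+1), s (i : ℕ) = U sstar (σ.symm i) := by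
    intro i
    rw [hsdef]
    simp only
    rw [dif_pos i.isLt]
  have hsslot : ∀ u : Fin n, s ((σ (Fin.castSucc u) : ℕ)) = u := by
    intro u
    rw [hsval, Equiv.symm_apply_apply, hUcs]
  have hslast : s ((σ (Fin.last n) : ℕ)) = sstar := by
    rw [hsval, Equiv.symm_apply_apply, hUlast]
  refine ⟨s, fun v => ⟨(σ (Fin.castSucc v) : ℕ), Fin.is_le _, hsslot v⟩, ?_⟩
  intro a b hab hbn
  by_cases hre : ∃ u : Fin n, ((Pi.single u 1 : Fin n → ZMod 2) ∈
      Submodule.span (ZMod 2) {w | ∃ j : ℕ, a ≤ j ∧ j ≤ b ∧ w = c j}) ∧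
      b < (σ (Fin.castSucc u) : ℕ)
  · refine ⟨a, min (2*b + 1 - a) n, by omega, by omega, by omega, ?_⟩
    intro u hu
    obtain ⟨y, hyphi, hybnd⟩ := hwit a b hbn u hu
    rcases hsols u y hyphi with h | h
    · have hb1 := hybnd (σ (Fin.castSucc u)) (by rw [h]; exact hσx u)
      exact ⟨(σ (Fin.castSucc u) : ℕ), by omega, by omega, hsslot u⟩
    · by_cases hus : u = sstar
      · have hb1 := hybnd (σ (Fin.last n)) (by rw [h, hus]; exact hσlast)
        refine ⟨(σ (Fin.last n) : ℕ), by omega, by omega, ?_⟩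
        rw [hslast, hus]
      · have hzbnd : ∀ j : Fin (n+1), (x u + δ) j ≠ 0 → a ≤ (j : ℕ) ∧ (j : ℕ) ≤ b := by
          intro j hj
          apply hybnd
          rw [h]
          exact hj
        by_cases h1 : (σ (Fin.castSucc u) : ℕ) < a
        · exfalso
          obtain ⟨u₀, hu₀rec, hu₀gt⟩ := hre
          obtain ⟨y₀, hy₀phi, hy₀bnd⟩ := hwit a b hbn u₀ hu₀rec
          rcases hsols u₀ y₀ hy₀phi with h0 | h0
          · have hb0 := hy₀bnd (σ (Fin.castSucc u₀)) (by rw [h0]; exact hσx u₀)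
            omega
          · exact one_sided (a := a) (b := b) δ (x u) (x u + δ) (x u₀) (x u₀ + δ)
              (hrelx u) (hrelx u₀) (hZne u₀) (hxsize u₀) hzbnd
              (fun j hj => hy₀bnd j (by rw [h0]; exact hj))
              (σ (Fin.castSucc u)) (σ (Fin.castSucc u₀)) (hσx u) h1 (hσx u₀) hu₀gt
        · by_cases h2 : (σ (Fin.castSucc u) : ℕ) ≤ b
          · exact ⟨(σ (Fin.castSucc u) : ℕ), by omega, by omega, hsslot u⟩
          · have hnotbad : ¬ badP u := fun hb => hus (hbadstar u hb)
            have haff : afford ((σ (Fin.castSucc u)) : ℕ) (x u + δ) := by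
              by_contra hnaff
              exact hnotbad ⟨σ (Fin.castSucc u), hσx u, hnaff⟩
            obtain ⟨jm, hjm, hjmv⟩ := sMin_mem (hZne u)
            obtain ⟨jM, hjM, hjMv⟩ := sMax_mem (hZne u)
            have hbm := hzbnd jm hjm
            have hbM := hzbnd jM hjM
            have hσn : ((σ (Fin.castSucc u)) : ℕ) ≤ n := Fin.is_le _
            obtain ⟨haf1, haf2⟩ := haff
            exact ⟨(σ (Fin.castSucc u) : ℕ), by omega, by omega, hsslot u⟩
  · refine ⟨a - (b + 1 - a), b, by omega, by omega, by omega, ?_⟩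
    intro u hu
    obtain ⟨y, hyphi, hybnd⟩ := hwit a b hbn u hu
    rcases hsols u y hyphi with h | h
    · have hb1 := hybnd (σ (Fin.castSucc u)) (by rw [h]; exact hσx u)
      exact ⟨(σ (Fin.castSucc u) : ℕ), by omega, by omega, hsslot u⟩
    · by_cases hus : u = sstar
      · have hb1 := hybnd (σ (Fin.last n)) (by rw [h, hus]; exact hσlast)
        refine ⟨(σ (Fin.last n) : ℕ), by omega, by omega, ?_⟩
        rw [hslast, hus]
      · have hzbnd : ∀ j : Fin (n+1), (x u + δ) j ≠ 0 → a ≤ (j : ℕ) ∧ (j : ℕ) ≤ b := by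
          intro j hj
          apply hybnd
          rw [h]
          exact hj
        by_cases h2 : b < (σ (Fin.castSucc u) : ℕ)
        · exact absurd ⟨u, hu, h2⟩ hre
        · by_cases h1 : a ≤ (σ (Fin.castSucc u) : ℕ)
          · exact ⟨(σ (Fin.castSucc u) : ℕ), by omega, by omega, hsslot u⟩
          · have hnotbad : ¬ badP u := fun hb => hus (hbadstar u hb)
            have haff : afford ((σ (Fin.castSucc u)) : ℕ) (x u + δ) := by
              by_contra hnaff
              exact hnotbad ⟨σ (Fin.castSucc u), hσx u, hnaff⟩
            obtain ⟨jm, hjm, hjmv⟩ := sMin_mem (hZne u)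
            obtain ⟨jM, hjM, hjMv⟩ := sMax_mem (hZne u)
            have hbm := hzbnd jm hjm
            have hbM := hzbnd jM hjM
            obtain ⟨haf1, haf2⟩ := haff
            exact ⟨(σ (Fin.castSucc u) : ℕ), by omega, by omega, hsslot u⟩

end CGL




/-- The chunks indexed by `S` are recoverable from the interval `[a, b]` of the
linearly coded store `c` (user chunk `u` is the basis vector `Pi.single u 1`). -/
def SpanRecovers {n : ℕ} (c : ℕ → (Fin n → ZMod 2)) (S : Set (Fin n))
    (a b : ℕ) : Prop :=
  ∀ u ∈ S, (Pi.single u 1 : Fin n → ZMod 2) ∈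
    Submodule.span (ZMod 2) {w : Fin n → ZMod 2 | ∃ j : ℕ, a ≤ j ∧ j ≤ b ∧ w = c j}

/-- Stretch number of a file with vertex set `S` and `ℓ` chunks in a linearly
coded store `c` of length `m`. -/
noncomputable def MinScoded {n : ℕ} (m : ℕ) (c : ℕ → (Fin n → ZMod 2))
    (S : Set (Fin n)) (ℓ : ℕ) : ℝ :=
  sInf {r : ℝ | ∃ a b : ℕ, a ≤ b ∧ b < m ∧ SpanRecovers c S a b ∧
    r = ((b : ℝ) - (a : ℝ) + 1) / (ℓ : ℝ)}

/-- The coded stretch metric `S^c_t(G, m)` over linearly coded stores of length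
`m` from which every file (simple path with at most `t` vertices) is
recoverable. -/
noncomputable def Sc {n : ℕ} (G : SimpleGraph (Fin n)) (t m : ℕ) : ℝ :=
  sInf {r : ℝ | ∃ c : ℕ → (Fin n → ZMod 2),
    (∀ (u v : Fin n) (p : G.Walk u v), p.IsPath → p.length + 1 ≤ t →
      ∃ a b : ℕ, a ≤ b ∧ b < m ∧ SpanRecovers c {x | x ∈ p.support} a b) ∧
    r = sSup {s : ℝ | ∃ (u v : Fin n) (p : G.Walk u v), p.IsPath ∧
      p.length + 1 ≤ t ∧ s = MinScoded m c {x | x ∈ p.support} (p.length + 1)}}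

/-- Stretch number of a file with vertex set `S` and `ℓ` chunks in an uncoded
store `s` of length `m`: the minimal covering interval length divided by `ℓ`. -/
noncomputable def MinSunc {n : ℕ} (m : ℕ) (s : ℕ → Fin n) (S : Set (Fin n))
    (ℓ : ℕ) : ℝ :=
  sInf {r : ℝ | ∃ a b : ℕ, a ≤ b ∧ b < m ∧
    (∀ u ∈ S, ∃ j : ℕ, a ≤ j ∧ j ≤ b ∧ s j = u) ∧
    r = ((b : ℝ) - (a : ℝ) + 1) / (ℓ : ℝ)}

/-- The uncoded stretch metric `S^u_t(G, m)` over stores of length `m` that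
contain every chunk at least once (within positions `0, …, m−1`). -/
noncomputable def Su {n : ℕ} (G : SimpleGraph (Fin n)) (t m : ℕ) : ℝ :=
  sInf {r : ℝ | ∃ s : ℕ → Fin n, (∀ v : Fin n, ∃ j : ℕ, j < m ∧ s j = v) ∧
    r = sSup {x : ℝ | ∃ (u v : Fin n) (p : G.Walk u v), p.IsPath ∧
      p.length + 1 ≤ t ∧ x = MinSunc m s {y | y ∈ p.support} (p.length + 1)}}

/-- Coding gain is at most 2 with one redundant chunk:
`S^u_t(G, n+1) ≤ 2 · S^c_t(G, n+1)`. -/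

theorem coding_gain_le_two {n t : ℕ} (G : SimpleGraph (Fin n)) (ht : 2 ≤ t) :
    Su G t (n + 1) ≤ 2 * Sc G t (n + 1) := by
  classical
  rcases Nat.eq_zero_or_pos n with hn0 | hn
  · subst hn0
    have hSu : Su G t (0 + 1) = 0 := by
      rw [Su]
      have hset : {r : ℝ | ∃ s : ℕ → Fin 0, (∀ v : Fin 0, ∃ j : ℕ, j < 0 + 1 ∧ s j = v) ∧
          r = sSup {x : ℝ | ∃ (u v : Fin 0) (p : G.Walk u v), p.IsPath ∧
            p.length + 1 ≤ t ∧ x = MinSunc (0+1) s {y | y ∈ p.support} (p.length + 1)}}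
          = (∅ : Set ℝ) := by
        rw [Set.eq_empty_iff_forall_notMem]
        rintro r ⟨s, _, _⟩
        exact (s 0).elim0
      rw [hset, Real.sInf_empty]
    have hSc : 0 ≤ Sc G t (0 + 1) := by
      rw [Sc]
      apply Real.sInf_nonneg
      rintro r ⟨c, _, rfl⟩
      apply Real.sSup_nonneg
      rintro x ⟨u, _⟩
      exact u.elim0
    rw [hSu]
    linarith
  · have hMinSuncNonneg : ∀ (s : ℕ → Fin n) (S : Set (Fin n)) (ℓ : ℕ),
        0 ≤ MinSunc (n+1) s S ℓ := by
      intro s S ℓ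
      apply Real.sInf_nonneg
      rintro r ⟨a, b, hab, _, _, rfl⟩
      apply div_nonneg _ (by positivity)
      have : (a : ℝ) ≤ b := by exact_mod_cast hab
      linarith
    set SC := {r : ℝ | ∃ c : ℕ → (Fin n → ZMod 2),
      (∀ (u v : Fin n) (p : G.Walk u v), p.IsPath → p.length + 1 ≤ t →
        ∃ a b : ℕ, a ≤ b ∧ b < n + 1 ∧ SpanRecovers c {x | x ∈ p.support} a b) ∧
      r = sSup {s : ℝ | ∃ (u v : Fin n) (p : G.Walk u v), p.IsPath ∧
        p.length + 1 ≤ t ∧ s = MinScoded (n+1) c {x | x ∈ p.support} (p.length + 1)}}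
      with hSCdef
    have hScEq : Sc G t (n + 1) = sInf SC := by rw [Sc, hSCdef]
    have key : ∀ r ∈ SC, Su G t (n+1) ≤ 2 * r := by
      rintro r ⟨c, hcrec, rfl⟩
      have hrec' : ∀ u : Fin n, (Pi.single u 1 : Fin n → ZMod 2) ∈
          Submodule.span (ZMod 2) {w | ∃ j : ℕ, j ≤ n ∧ w = c j} := by
        intro u
        obtain ⟨a, b, hab, hbm, hsp⟩ := hcrec u u SimpleGraph.Walk.nil
          SimpleGraph.Walk.IsPath.nil (by simp; omega)
        have hu := hsp u (by simp)
        refine Submodule.span_mono ?_ hu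
        rintro w ⟨j, hja, hjb, rfl⟩
        exact ⟨j, by omega, rfl⟩
      obtain ⟨s, hssurj, hsim⟩ := CGL.core hn c hrec'
      have hSuLe : Su G t (n+1) ≤ sSup {x : ℝ | ∃ (u v : Fin n) (p : G.Walk u v),
          p.IsPath ∧ p.length + 1 ≤ t ∧
          x = MinSunc (n+1) s {y | y ∈ p.support} (p.length + 1)} := by
        rw [Su]
        apply csInf_le
        · refine ⟨0, ?_⟩
          rintro r' ⟨s', _, rfl⟩
          apply Real.sSup_nonneg
          rintro x ⟨u, v, p, _, _, rfl⟩
          exact hMinSuncNonneg s' _ _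
        · exact ⟨s, fun v => by
            obtain ⟨j, hj, hsj⟩ := hssurj v
            exact ⟨j, by omega, hsj⟩, rfl⟩
      refine le_trans hSuLe ?_
      apply csSup_le
      · exact ⟨MinSunc (n+1) s
            {y | y ∈ (SimpleGraph.Walk.nil (u := (⟨0, hn⟩ : Fin n))).support}
            ((SimpleGraph.Walk.nil (u := (⟨0, hn⟩ : Fin n))).length + 1),
          ⟨0, hn⟩, ⟨0, hn⟩, SimpleGraph.Walk.nil, SimpleGraph.Walk.IsPath.nil,
          by simp; omega, rfl⟩
      · rintro x ⟨u, v, p, hp, hl, rfl⟩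
        set L : ℝ := ((p.length + 1 : ℕ) : ℝ) with hLdef
        have hLpos : (0:ℝ) < L := by rw [hLdef]; positivity
        set A := {r : ℝ | ∃ a b : ℕ, a ≤ b ∧ b < n + 1 ∧
            SpanRecovers c {x | x ∈ p.support} a b ∧
            r = ((b : ℝ) - (a : ℝ) + 1) / ((p.length + 1 : ℕ) : ℝ)} with hAdef
        have hMCeq : MinScoded (n+1) c {x | x ∈ p.support} (p.length + 1) = sInf A := by
          rw [MinScoded, hAdef]
        have hAne : A.Nonempty := by
          obtain ⟨a, b, hab, hbm, hsp⟩ := hcrec u v p hp hl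
          exact ⟨_, a, b, hab, hbm, hsp, rfl⟩
        have hstep : ∀ ρ ∈ A, MinSunc (n+1) s {y | y ∈ p.support} (p.length+1) ≤ 2 * ρ := by
          rintro ρ ⟨a, b, hab, hbm, hsp, rfl⟩
          obtain ⟨a', b', ha'b', hb'n, hlen, hcov⟩ := hsim a b hab (by omega)
          have hmem : ((b' : ℝ) - (a' : ℝ) + 1) / ((p.length + 1 : ℕ) : ℝ) ∈
              {r : ℝ | ∃ a2 b2 : ℕ, a2 ≤ b2 ∧ b2 < n + 1 ∧
                (∀ w ∈ {y | y ∈ p.support}, ∃ j : ℕ, a2 ≤ j ∧ j ≤ b2 ∧ s j = w) ∧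
                r = ((b2 : ℝ) - (a2 : ℝ) + 1) / ((p.length + 1 : ℕ) : ℝ)} := by
            refine ⟨a', b', ha'b', by omega, ?_, rfl⟩
            intro w hw
            exact hcov w (hsp w hw)
          have h1 : MinSunc (n+1) s {y | y ∈ p.support} (p.length + 1) ≤
              ((b' : ℝ) - (a' : ℝ) + 1) / ((p.length + 1 : ℕ) : ℝ) := by
            rw [MinSunc]
            apply csInf_le _ hmem
            refine ⟨0, ?_⟩
            rintro r' ⟨a2, b2, hab2, _, _, rfl⟩
            apply div_nonneg _ (by positivity)
            have : (a2 : ℝ) ≤ b2 := by exact_mod_cast hab2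
            linarith
          refine le_trans h1 ?_
          have hnum : (b' : ℝ) - a' + 1 ≤ 2 * ((b : ℝ) - a + 1) := by
            have hc : (b' : ℝ) + 1 + 2*(a:ℝ) ≤ 2*((b:ℝ)+1) + (a':ℝ) := by
              exact_mod_cast hlen
            linarith
          rw [← mul_div_assoc]
          rw [div_le_div_iff₀ hLpos hLpos]
          calc ((b' : ℝ) - a' + 1) * L ≤ (2 * ((b : ℝ) - a + 1)) * L := by
                apply mul_le_mul_of_nonneg_right hnum (le_of_lt hLpos)
          _ = 2 * ((b : ℝ) - a + 1) * L := by ring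
        have h2 : MinSunc (n+1) s {y | y ∈ p.support} (p.length + 1) / 2 ≤
            MinScoded (n+1) c {y | y ∈ p.support} (p.length + 1) := by
          rw [show ({y | y ∈ p.support} : Set (Fin n)) = {x | x ∈ p.support} from rfl]
          rw [hMCeq]
          apply le_csInf hAne
          intro ρ hρ
          have := hstep ρ hρ
          linarith
        have hbddc : BddAbove {s : ℝ | ∃ (u v : Fin n) (p : G.Walk u v), p.IsPath ∧
            p.length + 1 ≤ t ∧ s = MinScoded (n+1) c {x | x ∈ p.support} (p.length + 1)} := by
          refine ⟨((n:ℝ) + 1), ?_⟩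
          rintro z ⟨u', v', p', hp', hl', rfl⟩
          obtain ⟨a, b, hab, hbm, hsp⟩ := hcrec u' v' p' hp' hl'
          have hmem2 : ((b : ℝ) - (a : ℝ) + 1) / ((p'.length + 1 : ℕ) : ℝ) ∈
              {r : ℝ | ∃ a2 b2 : ℕ, a2 ≤ b2 ∧ b2 < n + 1 ∧
                SpanRecovers c {x | x ∈ p'.support} a2 b2 ∧
                r = ((b2 : ℝ) - (a2 : ℝ) + 1) / ((p'.length + 1 : ℕ) : ℝ)} :=
            ⟨a, b, hab, hbm, hsp, rfl⟩
          have h3 : MinScoded (n+1) c {x | x ∈ p'.support} (p'.length + 1) ≤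
              ((b : ℝ) - (a : ℝ) + 1) / ((p'.length + 1 : ℕ) : ℝ) := by
            rw [MinScoded]
            apply csInf_le _ hmem2
            refine ⟨0, ?_⟩
            rintro r' ⟨a2, b2, hab2, _, _, rfl⟩
            apply div_nonneg _ (by positivity)
            have : (a2 : ℝ) ≤ b2 := by exact_mod_cast hab2
            linarith
          have h4 : ((b : ℝ) - (a : ℝ) + 1) / ((p'.length + 1 : ℕ) : ℝ) ≤ (n : ℝ) + 1 := by
            have hX : (0:ℝ) ≤ (b : ℝ) - a + 1 := by
              have : (a : ℝ) ≤ b := by exact_mod_cast hab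
              linarith
            have hL1 : (1:ℝ) ≤ ((p'.length + 1 : ℕ) : ℝ) := by
              exact_mod_cast Nat.succ_le_succ (Nat.zero_le _)
            have h5 := div_le_self hX hL1
            have h6 : (b : ℝ) - a + 1 ≤ (n : ℝ) + 1 := by
              have hb : (b : ℝ) ≤ n := by exact_mod_cast (by omega : b ≤ n)
              have ha : (0 : ℝ) ≤ a := by positivity
              linarith
            linarith
          linarith
        have h5 : MinScoded (n+1) c {y | y ∈ p.support} (p.length+1) ≤
            sSup {s : ℝ | ∃ (u v : Fin n) (p : G.Walk u v), p.IsPath ∧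
              p.length + 1 ≤ t ∧ s = MinScoded (n+1) c {x | x ∈ p.support} (p.length + 1)} :=
          le_csSup hbddc ⟨u, v, p, hp, hl, rfl⟩
        linarith
    have hScne : SC.Nonempty := by
      refine ⟨_, (fun j => if h : j < n then Pi.single (⟨j, h⟩ : Fin n) 1 else 0), ?_, rfl⟩
      intro u v p hp hl
      refine ⟨0, n - 1, by omega, by omega, ?_⟩
      intro w hw
      apply Submodule.subset_span
      refine ⟨(w : ℕ), by omega, ?_, ?_⟩
      · have := w.isLt; omega
      · show Pi.single w 1 = if h : (w : ℕ) < n then Pi.single (⟨(w : ℕ), h⟩ : Fin n) 1 else 0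
        rw [dif_pos w.isLt]
    have h6 : Su G t (n+1) / 2 ≤ Sc G t (n+1) := by
      rw [hScEq]
      apply le_csInf hScne
      intro r hr
      have := key r hr
      linarith
    linarith
end

section
/- In Example 1's graph (V = {v_1,...,v_{8N}} ∪ {a, b}, line edges {v_i, v_{i+1}} for i ∈ [8N−1], edges {a, v_i} for all i ∈ [6N], edges {b, v_i} for all i ∈ {2N+1,...,8N}, and edge {a,b}), any uncoded chunk store of length n+1 = 8N+3 (a sequence over V containing each vertex, with exactly one repetition) contains an edge {u,w} of the graph such that every interval covering both an occurrence of u and an occurrence of w has length at least 3N+2. Hence S^u_2(G, n+1) ≥ (3N+2)/2. -/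
/-- Example 1's graph: vertices `v_1, …, v_{8N}` (here indices `0, …, 8N−1`),
`a` (index `8N`) and `b` (index `8N+1`); line edges `{v_i, v_{i+1}}`, edges
`{a, v_i}` for `i ≤ 6N`, edges `{b, v_i}` for `2N < i ≤ 8N`, and the edge
`{a, b}`. -/
def exampleGraph (N : ℕ) : SimpleGraph (Fin (8 * N + 2)) :=
  SimpleGraph.fromRel (fun u w =>
    (u.val + 1 = w.val ∧ w.val < 8 * N) ∨
    (u.val = 8 * N ∧ w.val < 6 * N) ∨
    (u.val = 8 * N + 1 ∧ 2 * N ≤ w.val ∧ w.val < 8 * N) ∨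
    (u.val = 8 * N ∧ w.val = 8 * N + 1))

/-- Minimal covering interval length of an edge `{u, w}` in the store `s`. -/
noncomputable def coverLen {n m : ℕ} (s : Fin m → Fin n) (u w : Fin n) : ℕ :=
  sInf {ℓ : ℕ | ∃ i j : Fin m, s i = u ∧ s j = w ∧
    ℓ = ((i.val : ℤ) - (j.val : ℤ)).natAbs + 1}

/-- The uncoded stretch metric for `t = 2` over surjective stores of length `m`. -/
noncomputable def Su2 {n : ℕ} (G : SimpleGraph (Fin n)) (m : ℕ) : ℝ :=
  sInf {r : ℝ | ∃ s : Fin m → Fin n, Function.Surjective s ∧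
    r = sSup {x : ℝ | ∃ u w : Fin n, G.Adj u w ∧ x = ((coverLen s u w : ℕ) : ℝ) / 2}}

/-- Pigeonhole key lemma: if `c` has a unique occurrence `p` and `6N+1`
distinct neighbors, some neighbor is always far from `p`. -/
private lemma key_lemma {N : ℕ} (s : Fin (8 * N + 3) → Fin (8 * N + 2))
    (c : Fin (8 * N + 2)) (p : Fin (8 * N + 3)) (hp : s p = c)
    (hpu : ∀ i, s i = c → i = p)
    (ν : Fin (6 * N + 1) → Fin (8 * N + 2)) (hν : Function.Injective ν)
    (hνc : ∀ k, ν k ≠ c)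
    (hadj : ∀ k, (exampleGraph N).Adj c (ν k)) :
    ∃ u w : Fin (8 * N + 2), (exampleGraph N).Adj u w ∧
      ∀ i j : Fin (8 * N + 3), s i = u → s j = w →
        3 * N + 2 ≤ ((i.val : ℤ) - (j.val : ℤ)).natAbs + 1 := by
  have hfar : ∃ k : Fin (6 * N + 1), ∀ j, s j = ν k →
      3 * N < (((j : ℕ) : ℤ) - ((p : ℕ) : ℤ)).natAbs := by
    by_contra hcon
    push_neg at hcon
    choose f hf1 hf2 using hcon
    have hfp : ∀ k, (f k).val ≠ p.val := by
      intro k h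
      exact hνc k (by rw [← hf1 k, Fin.ext h, hp])
    have hElt : ∀ k : Fin (6 * N + 1),
        (if (f k).val < p.val then p.val - (f k).val - 1
          else 3 * N + ((f k).val - p.val - 1)) < 6 * N := by
      intro k
      have h1 := hf2 k
      have h2 := hfp k
      split <;> omega
    set g : Fin (6 * N + 1) → Fin (6 * N) := fun k => ⟨_, hElt k⟩ with hg
    have hginj : Function.Injective g := by
      intro k₁ k₂ h
      have hv : (if (f k₁).val < p.val then p.val - (f k₁).val - 1
          else 3 * N + ((f k₁).val - p.val - 1)) =
          (if (f k₂).val < p.val then p.val - (f k₂).val - 1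
          else 3 * N + ((f k₂).val - p.val - 1)) := congrArg Fin.val h
      have hfeq : f k₁ = f k₂ := by
        apply Fin.ext
        have h1 := hf2 k₁; have h2 := hf2 k₂
        have h3 := hfp k₁; have h4 := hfp k₂
        split at hv <;> split at hv <;> omega
      apply hν
      rw [← hf1 k₁, ← hf1 k₂, hfeq]
    have hcard := Fintype.card_le_of_injective g hginj
    simp only [Fintype.card_fin] at hcard
    omega
  obtain ⟨k, hk⟩ := hfar
  refine ⟨c, ν k, hadj k, ?_⟩
  intro i j hi hj
  have h1 := hk j hj
  have hip : i = p := hpu i hi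
  subst hip
  omega

/-- In a surjective store of length `8N+3`, `a` or `b` occurs exactly once. -/
private lemma unique_fiber {N : ℕ} (s : Fin (8 * N + 3) → Fin (8 * N + 2))
    (hs : Function.Surjective s) :
    (∃ p, s p = (⟨8 * N, by omega⟩ : Fin (8 * N + 2)) ∧
        ∀ i, s i = (⟨8 * N, by omega⟩ : Fin (8 * N + 2)) → i = p) ∨
    (∃ p, s p = (⟨8 * N + 1, by omega⟩ : Fin (8 * N + 2)) ∧
        ∀ i, s i = (⟨8 * N + 1, by omega⟩ : Fin (8 * N + 2)) → i = p) := by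
  by_contra hcon
  push_neg at hcon
  obtain ⟨h1, h2⟩ := hcon
  set a : Fin (8 * N + 2) := ⟨8 * N, by omega⟩ with ha
  set b : Fin (8 * N + 2) := ⟨8 * N + 1, by omega⟩ with hb
  classical
  choose t ht using hs
  have htinj : Function.Injective t := by
    intro y₁ y₂ h
    rw [← ht y₁, ← ht y₂, h]
  obtain ⟨p, hpa, hpne⟩ := h1 (t a) (ht a)
  obtain ⟨q, hqb, hqne⟩ := h2 (t b) (ht b)
  have hpq : p ≠ q := by
    intro h
    rw [h, hqb] at hpa
    have := congrArg Fin.val hpa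
    simp only [ha, hb] at this
    omega
  have hpr : p ∉ Finset.univ.image t := by
    simp only [Finset.mem_image, Finset.mem_univ, true_and]
    rintro ⟨y, rfl⟩
    have : y = a := by rw [← ht y, hpa]
    exact hpne (by rw [this])
  have hqr : q ∉ Finset.univ.image t := by
    simp only [Finset.mem_image, Finset.mem_univ, true_and]
    rintro ⟨y, rfl⟩
    have : y = b := by rw [← ht y, hqb]
    exact hqne (by rw [this])
  have hpins : p ∉ insert q (Finset.univ.image t) := by
    simp only [Finset.mem_insert]
    rintro (h | h)
    · exact hpq h
    · exact hpr h
  have hcard : (insert p (insert q (Finset.univ.image t))).card ≤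
      (Finset.univ : Finset (Fin (8 * N + 3))).card :=
    Finset.card_le_card (Finset.subset_univ _)
  rw [Finset.card_insert_of_notMem hpins, Finset.card_insert_of_notMem hqr,
    Finset.card_image_of_injective _ htinj, Finset.card_univ, Finset.card_univ] at hcard
  simp only [Fintype.card_fin] at hcard
  omega

/-- In Example 1's graph, every uncoded store of length `n + 1 = 8N + 3`
(surjective onto the `8N + 2` vertices) has some edge whose every covering
interval has length at least `3N + 2`; hence `S^u_2(G, n+1) ≥ (3N+2)/2`. -/
theorem example1_uncoded_lower_bound {N : ℕ} (hN : 1 ≤ N) :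
    (∀ s : Fin (8 * N + 3) → Fin (8 * N + 2), Function.Surjective s →
      ∃ u w : Fin (8 * N + 2), (exampleGraph N).Adj u w ∧
        ∀ i j : Fin (8 * N + 3), s i = u → s j = w →
          3 * N + 2 ≤ ((i.val : ℤ) - (j.val : ℤ)).natAbs + 1) ∧
    ((3 * N + 2 : ℝ) / 2 ≤ Su2 (exampleGraph N) (8 * N + 3)) := by
  have main : ∀ s : Fin (8 * N + 3) → Fin (8 * N + 2), Function.Surjective s →
      ∃ u w : Fin (8 * N + 2), (exampleGraph N).Adj u w ∧
        ∀ i j : Fin (8 * N + 3), s i = u → s j = w →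
          3 * N + 2 ≤ ((i.val : ℤ) - (j.val : ℤ)).natAbs + 1 := by
    intro s hs
    rcases unique_fiber s hs with ⟨p, hp, hpu⟩ | ⟨p, hp, hpu⟩
    · -- c = a, neighbors: v_0 … v_{6N-1} and b
      refine key_lemma s _ p hp hpu
        (fun k => if h : k.val < 6 * N then ⟨k.val, by omega⟩ else ⟨8 * N + 1, by omega⟩)
        ?_ ?_ ?_
      · intro k₁ k₂ h
        have hk₁ := k₁.isLt
        have hk₂ := k₂.isLt
        by_cases h₁ : k₁.val < 6 * N <;> by_cases h₂ : k₂.val < 6 * N <;>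
          simp only [h₁, h₂, dite_true, dite_false, Fin.mk.injEq] at h <;>
          exact Fin.ext (by omega)
      · intro k h
        have hk := k.isLt
        by_cases h' : k.val < 6 * N <;>
          simp only [h', dite_true, dite_false, Fin.mk.injEq] at h <;> omega
      · intro k
        have hk := k.isLt
        by_cases h : k.val < 6 * N <;>
          simp only [exampleGraph, SimpleGraph.fromRel_adj, h, dite_true, dite_false,
            ne_eq, Fin.mk.injEq, Fin.val_mk, true_and, and_true, true_or, or_true,
            and_self] <;> omega
    · -- c = b, neighbors: v_{2N} … v_{8N-1} and a
      refine key_lemma s _ p hp hpu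
        (fun k => if h : k.val < 6 * N then ⟨2 * N + k.val, by omega⟩ else ⟨8 * N, by omega⟩)
        ?_ ?_ ?_
      · intro k₁ k₂ h
        have hk₁ := k₁.isLt
        have hk₂ := k₂.isLt
        by_cases h₁ : k₁.val < 6 * N <;> by_cases h₂ : k₂.val < 6 * N <;>
          simp only [h₁, h₂, dite_true, dite_false, Fin.mk.injEq] at h <;>
          exact Fin.ext (by omega)
      · intro k h
        have hk := k.isLt
        by_cases h' : k.val < 6 * N <;>
          simp only [h', dite_true, dite_false, Fin.mk.injEq] at h <;> omega
      · intro k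
        have hk := k.isLt
        by_cases h : k.val < 6 * N <;>
          simp only [exampleGraph, SimpleGraph.fromRel_adj, h, dite_true, dite_false,
            ne_eq, Fin.mk.injEq, Fin.val_mk, true_and, and_true, true_or, or_true,
            and_self] <;> omega
  refine ⟨main, ?_⟩
  have hwit : ∃ s : Fin (8 * N + 3) → Fin (8 * N + 2), Function.Surjective s := by
    refine ⟨fun i => ⟨min i.val (8 * N + 1), by omega⟩, ?_⟩
    intro y
    have hy := y.isLt
    refine ⟨⟨y.val, by omega⟩, ?_⟩
    apply Fin.ext
    show min y.val (8 * N + 1) = y.val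
    omega
  apply le_csInf
  · obtain ⟨s₀, hs₀⟩ := hwit
    exact ⟨_, s₀, hs₀, rfl⟩
  · rintro r ⟨s, hs, rfl⟩
    obtain ⟨u, w, huw, hfar⟩ := main s hs
    have hne : {ℓ : ℕ | ∃ i j : Fin (8 * N + 3), s i = u ∧ s j = w ∧
        ℓ = ((i.val : ℤ) - (j.val : ℤ)).natAbs + 1}.Nonempty := by
      obtain ⟨i, hi⟩ := hs u
      obtain ⟨j, hj⟩ := hs w
      exact ⟨_, i, j, hi, hj, rfl⟩
    have hmem : ∃ i j : Fin (8 * N + 3), s i = u ∧ s j = w ∧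
        coverLen s u w = ((i.val : ℤ) - (j.val : ℤ)).natAbs + 1 := Nat.sInf_mem hne
    obtain ⟨i, j, hi, hj, hl⟩ := hmem
    have h2 := hfar i j hi hj
    have hcl : 3 * N + 2 ≤ coverLen s u w := by omega
    have hbdd : BddAbove {x : ℝ | ∃ u w : Fin (8 * N + 2), (exampleGraph N).Adj u w ∧
        x = ((coverLen s u w : ℕ) : ℝ) / 2} := by
      refine ⟨((8 * N + 3 : ℕ) : ℝ), ?_⟩
      rintro x ⟨u', w', _, rfl⟩
      obtain ⟨i', hi'⟩ := hs u'
      obtain ⟨j', hj'⟩ := hs w'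
      have hle1 : coverLen s u' w' ≤ ((i'.val : ℤ) - (j'.val : ℤ)).natAbs + 1 :=
        Nat.sInf_le ⟨i', j', hi', hj', rfl⟩
      have hi'' := i'.isLt
      have hj'' := j'.isLt
      have hle : coverLen s u' w' ≤ 8 * N + 3 := by omega
      have hlc : ((coverLen s u' w' : ℕ) : ℝ) ≤ ((8 * N + 3 : ℕ) : ℝ) := by
        exact_mod_cast hle
      have hpos : (0 : ℝ) ≤ ((coverLen s u' w' : ℕ) : ℝ) := by positivity
      linarith
    have hmem2 : ((coverLen s u w : ℕ) : ℝ) / 2 ∈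
        {x : ℝ | ∃ u w : Fin (8 * N + 2), (exampleGraph N).Adj u w ∧
          x = ((coverLen s u w : ℕ) : ℝ) / 2} := ⟨u, w, huw, rfl⟩
    have hsup := le_csSup hbdd hmem2
    have hc : ((3 * N + 2 : ℕ) : ℝ) ≤ ((coverLen s u w : ℕ) : ℝ) := by exact_mod_cast hcl
    have hfin : ((3 * N + 2 : ℕ) : ℝ) / 2 ≤ ((coverLen s u w : ℕ) : ℝ) / 2 := by linarith
    have := le_trans hfin hsup
    push_cast at this ⊢
    linarith
end
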